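/- Let γ > 0, δ ∈ (0,1), α ∈ (0,1), and suppose p is a distribution on Π and f : Π → [0,1] satisfies P_{π∼p}(S − f(π) ≤ α/2) ≥ γ where S = sup_π f(π). Draw m = ⌈(1/γ)·log(2/δ)⌉ i.i.d. arms π₁,…,π_m from p; for each, form an estimate f̂(πᵢ) as the average of n = ⌈(8/α²)·log(4m/δ)⌉ i.i.d. reward samples in [0,1] with mean f(πᵢ). Then with probability at least 1 − δ, the arm π̂ maximizing f̂ satisfies S − f(π̂) ≤ α. -/

import Mathlib

open MeasureTheory ProbabilityTheory


lemma hoeffding_aux (p : ℝ) (hp0 : 0 ≤ p) (hp1 : p ≤ 1) (t : ℝ) :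
    1 - p + p * Real.exp t ≤ Real.exp (t * p + t ^ 2 / 8) := by
  set D : ℝ → ℝ := fun u => 1 - p + p * Real.exp u with hDdef
  have hD : ∀ u, 0 < D u := by
    intro u
    show 0 < 1 - p + p * Real.exp u
    rcases le_total (Real.exp u) 1 with h | h
    · nlinarith [Real.exp_pos u]
    · nlinarith [Real.exp_pos u]
  have derivD : ∀ u, HasDerivAt D (p * Real.exp u) u := fun u => by
    exact ((Real.hasDerivAt_exp u).const_mul p).const_add (1 - p)
  set G : ℝ → ℝ := fun u => p + u / 4 - p * Real.exp u / D u with hGdef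
  set F : ℝ → ℝ := fun u => u * p + u ^ 2 / 8 - Real.log (D u) with hFdef
  have derivF : ∀ u, HasDerivAt F (G u) u := by
    intro u
    have h1 : HasDerivAt (fun u : ℝ => u * p + u ^ 2 / 8) (p + u / 4) u := by
      have := ((hasDerivAt_id u).mul_const p).add ((hasDerivAt_pow 2 u).div_const 8)
      refine this.congr_deriv ?_
      ring
    have h2 : HasDerivAt (fun u => Real.log (D u)) (p * Real.exp u / D u) u :=
      (derivD u).log (hD u).ne'
    exact h1.sub h2
  have derivG : ∀ u, HasDerivAt G (1 / 4 - p * Real.exp u * (1 - p) / (D u) ^ 2) u := by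
    intro u
    have h1 : HasDerivAt (fun u : ℝ => p + u / 4) (1 / 4) u := by
      simpa using ((hasDerivAt_id u).div_const 4).const_add p
    have h2 : HasDerivAt (fun u => p * Real.exp u / D u)
        ((p * Real.exp u * D u - p * Real.exp u * (p * Real.exp u)) / (D u) ^ 2) u :=
      ((Real.hasDerivAt_exp u).const_mul p).div (derivD u) (hD u).ne'
    have := h1.sub h2
    refine this.congr_deriv ?_
    have : D u = 1 - p + p * Real.exp u := rfl
    rw [this]
    ring
  have hG' : ∀ u, 0 ≤ 1 / 4 - p * Real.exp u * (1 - p) / (D u) ^ 2 := by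
    intro u
    have hDu := hD u
    rw [sub_nonneg, div_le_iff₀ (by positivity)]
    have : D u = 1 - p + p * Real.exp u := rfl
    nlinarith [sq_nonneg ((1 - p) - p * Real.exp u)]
  have hGmono : Monotone G :=
    monotone_of_deriv_nonneg (fun u => (derivG u).differentiableAt)
      (fun u => by rw [(derivG u).deriv]; exact hG' u)
  have hG0 : G 0 = 0 := by
    have hD0 : D 0 = 1 := by simp [hDdef]
    simp [hGdef, hD0]
  have hF0 : F 0 = 0 := by
    have hD0 : D 0 = 1 := by simp [hDdef]
    simp [hFdef, hD0]
  have hFnonneg : ∀ u, 0 ≤ F u := by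
    intro u
    have hdiff : Differentiable ℝ F := fun x => (derivF x).differentiableAt
    rcases le_total 0 u with h | h
    · have hmono : MonotoneOn F (Set.Ici 0) := by
        refine monotoneOn_of_deriv_nonneg (convex_Ici 0) hdiff.continuous.continuousOn
          hdiff.differentiableOn ?_
        intro x hx
        rw [(derivF x).deriv]
        rw [interior_Ici] at hx
        have : G 0 ≤ G x := hGmono (le_of_lt hx)
        linarith [hG0]
      have := hmono (Set.self_mem_Ici) (Set.mem_Ici.mpr h) h
      linarith [hF0]
    · have hanti : AntitoneOn F (Set.Iic 0) := by
        refine antitoneOn_of_deriv_nonpos (convex_Iic 0) hdiff.continuous.continuousOn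
          hdiff.differentiableOn ?_
        intro x hx
        rw [(derivF x).deriv]
        rw [interior_Iic] at hx
        have : G x ≤ G 0 := hGmono (le_of_lt hx)
        linarith [hG0]
      have := hanti (Set.mem_Iic.mpr h) (Set.self_mem_Iic) h
      linarith [hF0]
  have hlog : Real.log (D t) ≤ t * p + t ^ 2 / 8 := by
    have := hFnonneg t
    simp only [hFdef] at this
    linarith
  have := (Real.log_le_iff_le_exp (hD t)).mp hlog
  simpa [hDdef] using this


lemma pi_integral_pow {E : Type*} [MeasurableSpace E] (ν : Measure E) [IsProbabilityMeasure ν]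
    (n : ℕ) (g : E → ℝ) (hg : Integrable g ν) :
    Integrable (fun x : Fin n → E => ∏ j, g (x j)) (Measure.pi fun _ => ν) ∧
      ∫ x : Fin n → E, ∏ j, g (x j) ∂(Measure.pi fun _ => ν) = (∫ x, g x ∂ν) ^ n := by
  letI : MeasureSpace E := ⟨ν⟩
  haveI : SigmaFinite (volume : Measure E) := inferInstanceAs (SigmaFinite ν)
  refine ⟨Integrable.fintype_prod (f := fun _ : Fin n => g) fun _ => hg, ?_⟩
  simpa using integral_fintype_prod_eq_pow (ι := Fin n) (μ := ν) g

lemma pi_eval_mem {E : Type*} [MeasurableSpace E] (ν : Measure E) [IsProbabilityMeasure ν]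
    {m : ℕ} (i : Fin m) (B : Set E) :
    Measure.pi (fun _ : Fin m => ν) {x | x i ∈ B} = ν B := by
  classical
  have hset : {x : Fin m → E | x i ∈ B} =
      Set.pi Set.univ (Function.update (fun _ : Fin m => (Set.univ : Set E)) i B) := by
    ext x
    simp only [Set.mem_setOf_eq, Set.mem_pi, Set.mem_univ, forall_true_left]
    constructor
    · intro h k
      rcases eq_or_ne k i with rfl | hk
      · simpa using h
      · simp [Function.update_of_ne hk]
    · intro h
      simpa using h i
  rw [hset, Measure.pi_pi]
  rw [Finset.prod_eq_single i]
  · simp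
  · intro k _ hk
    simp [Function.update_of_ne hk]
  · simp

lemma ae_mem_Icc (ν : Measure ℝ) (hsupp : ν (Set.Icc (0:ℝ) 1)ᶜ = 0) :
    ∀ᵐ x ∂ν, x ∈ Set.Icc (0:ℝ) 1 := by
  rw [ae_iff]
  convert hsupp using 2
  rfl

lemma integrable_id' (ν : Measure ℝ) [IsProbabilityMeasure ν]
    (hsupp : ν (Set.Icc (0:ℝ) 1)ᶜ = 0) : Integrable (fun x : ℝ => x) ν := by
  refine Integrable.mono' (integrable_const 1) measurable_id.aestronglyMeasurable ?_
  filter_upwards [ae_mem_Icc ν hsupp] with x hx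
  rw [Real.norm_eq_abs, abs_le]
  exact ⟨by linarith [hx.1], hx.2⟩

lemma mean_nonneg' (ν : Measure ℝ) (hsupp : ν (Set.Icc (0:ℝ) 1)ᶜ = 0) : 0 ≤ ∫ x, x ∂ν :=
  integral_nonneg_of_ae ((ae_mem_Icc ν hsupp).mono fun _ hx => hx.1)

lemma mean_le_one' (ν : Measure ℝ) [IsProbabilityMeasure ν]
    (hsupp : ν (Set.Icc (0:ℝ) 1)ᶜ = 0) : (∫ x, x ∂ν) ≤ 1 := by
  have := integral_mono_ae (integrable_id' ν hsupp) (integrable_const 1)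
    ((ae_mem_Icc ν hsupp).mono fun _ hx => hx.2)
  simpa using this

lemma integrable_exp_mul (ν : Measure ℝ) [IsProbabilityMeasure ν]
    (hsupp : ν (Set.Icc (0:ℝ) 1)ᶜ = 0) (t : ℝ) :
    Integrable (fun x : ℝ => Real.exp (t * x)) ν := by
  refine Integrable.mono' (integrable_const (Real.exp |t|))
    (Real.measurable_exp.comp (measurable_const.mul measurable_id)).aestronglyMeasurable ?_
  filter_upwards [ae_mem_Icc ν hsupp] with x hx
  rw [Real.norm_eq_abs, abs_of_pos (Real.exp_pos _), Real.exp_le_exp]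
  calc t * x ≤ |t * x| := le_abs_self _
    _ = |t| * |x| := abs_mul t x
    _ ≤ |t| * 1 := by
        refine mul_le_mul_of_nonneg_left ?_ (abs_nonneg t)
        rw [abs_le]; exact ⟨by linarith [hx.1], hx.2⟩
    _ = |t| := mul_one _

lemma mgf_le (ν : Measure ℝ) [IsProbabilityMeasure ν]
    (hsupp : ν (Set.Icc (0:ℝ) 1)ᶜ = 0) (t : ℝ) :
    ∫ x, Real.exp (t * x) ∂ν ≤ Real.exp (t * (∫ x, x ∂ν) + t ^ 2 / 8) := by
  set c := ∫ x, x ∂ν with hc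
  have hint1 : Integrable (fun x : ℝ => 1 + x * (Real.exp t - 1)) ν :=
    (integrable_const 1).add ((integrable_id' ν hsupp).mul_const _)
  have hmono : ∫ x, Real.exp (t * x) ∂ν ≤ ∫ x, (1 + x * (Real.exp t - 1)) ∂ν := by
    refine integral_mono_ae (integrable_exp_mul ν hsupp t) hint1 ?_
    filter_upwards [ae_mem_Icc ν hsupp] with x hx
    have hcv := convexOn_exp.2 (Set.mem_univ (0:ℝ)) (Set.mem_univ t)
      (by linarith [hx.2] : (0:ℝ) ≤ 1 - x) hx.1 (by ring)
    simp only [smul_eq_mul, mul_zero, Real.exp_zero, mul_one] at hcv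
    calc Real.exp (t * x) = Real.exp ((1 - x) * 0 + x * t) := by ring_nf
      _ ≤ (1 - x) * 1 + x * Real.exp t := by simpa using hcv
      _ = 1 + x * (Real.exp t - 1) := by ring
  have hval : ∫ x, (1 + x * (Real.exp t - 1)) ∂ν = 1 + c * (Real.exp t - 1) := by
    rw [integral_add (integrable_const 1) ((integrable_id' ν hsupp).mul_const _),
      integral_mul_const, integral_const, ← hc]
    simp
  have hc0 := mean_nonneg' ν hsupp
  have hc1 := mean_le_one' ν hsupp
  rw [← hc] at hc0 hc1
  calc ∫ x, Real.exp (t * x) ∂ν ≤ 1 + c * (Real.exp t - 1) := by rw [← hval]; exact hmono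
    _ = 1 - c + c * Real.exp t := by ring
    _ ≤ Real.exp (t * c + t ^ 2 / 8) := hoeffding_aux c hc0 hc1 t

lemma chernoff (ν : Measure ℝ) [IsProbabilityMeasure ν]
    (hsupp : ν (Set.Icc (0:ℝ) 1)ᶜ = 0) (n : ℕ) (t r : ℝ) :
    Measure.pi (fun _ : Fin n => ν) {x | Real.exp (t * r) ≤ Real.exp (t * ∑ j, x j)} ≤
      ENNReal.ofReal (Real.exp ((n : ℝ) * (t * (∫ x, x ∂ν) + t ^ 2 / 8) - t * r)) := by
  classical
  set c := ∫ x, x ∂ν with hc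
  obtain ⟨hint, hval⟩ := pi_integral_pow ν n (fun x => Real.exp (t * x))
    (integrable_exp_mul ν hsupp t)
  have hprod : (fun x : Fin n → ℝ => ∏ j, Real.exp (t * x j)) =
      fun x : Fin n → ℝ => Real.exp (t * ∑ j, x j) := by
    ext x
    rw [← Real.exp_sum, Finset.mul_sum]
  rw [hprod] at hint hval
  set πn := Measure.pi (fun _ : Fin n => ν) with hπn
  have hmgf : ∫ x, Real.exp (t * ∑ j, x j) ∂πn ≤ Real.exp ((n:ℝ) * (t * c + t ^ 2 / 8)) := by
    rw [hval, Real.exp_nat_mul]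
    exact pow_le_pow_left₀ (integral_nonneg fun x => (Real.exp_pos _).le)
      (mgf_le ν hsupp t) n
  have hmarkov := mul_meas_ge_le_integral_of_nonneg
    (ae_of_all πn fun x => (Real.exp_pos (t * ∑ j, x j)).le) hint (Real.exp (t * r))
  have hne : πn {x | Real.exp (t * r) ≤ Real.exp (t * ∑ j, x j)} ≠ ⊤ := measure_ne_top _ _
  have htr : (πn {x | Real.exp (t * r) ≤ Real.exp (t * ∑ j, x j)}).toReal ≤
      Real.exp ((n:ℝ) * (t * c + t ^ 2 / 8) - t * r) := by
    rw [Real.exp_sub, le_div_iff₀ (Real.exp_pos _)]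
    calc (πn {x | Real.exp (t * r) ≤ Real.exp (t * ∑ j, x j)}).toReal * Real.exp (t * r)
        = Real.exp (t * r) * (πn {x | Real.exp (t * r) ≤ Real.exp (t * ∑ j, x j)}).toReal := by
          ring
      _ ≤ ∫ x, Real.exp (t * ∑ j, x j) ∂πn := hmarkov
      _ ≤ _ := hmgf
  calc πn {x | Real.exp (t * r) ≤ Real.exp (t * ∑ j, x j)}
      = ENNReal.ofReal (πn {x | Real.exp (t * r) ≤ Real.exp (t * ∑ j, x j)}).toReal :=
        (ENNReal.ofReal_toReal hne).symm
    _ ≤ _ := ENNReal.ofReal_le_ofReal htr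

lemma hoeffding_pi (ν : Measure ℝ) [IsProbabilityMeasure ν]
    (hsupp : ν (Set.Icc (0:ℝ) 1)ᶜ = 0) (n : ℕ) (hn : 0 < n) (s : ℝ) (hs : 0 < s) :
    Measure.pi (fun _ : Fin n => ν) {x | s < |(∑ j, x j) / n - ∫ x, x ∂ν|} ≤
      ENNReal.ofReal (2 * Real.exp (-(2 * n * s ^ 2))) := by
  classical
  set c := ∫ x, x ∂ν with hc
  set πn := Measure.pi (fun _ : Fin n => ν) with hπn
  have hnpos : (0:ℝ) < n := Nat.cast_pos.mpr hn
  have hsub : {x : Fin n → ℝ | s < |(∑ j, x j) / n - c|} ⊆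
      {x : Fin n → ℝ | Real.exp (4 * s * ((n:ℝ) * (c + s))) ≤ Real.exp (4 * s * ∑ j, x j)} ∪
      {x : Fin n → ℝ | Real.exp ((-(4 * s)) * ((n:ℝ) * (c - s))) ≤
        Real.exp ((-(4 * s)) * ∑ j, x j)} := by
    intro x hx
    simp only [Set.mem_setOf_eq] at hx
    rcases lt_abs.mp hx with h | h
    · left
      show Real.exp _ ≤ Real.exp _
      rw [Real.exp_le_exp]
      have hsum : (n:ℝ) * (c + s) ≤ ∑ j, x j := by
        rw [lt_sub_iff_add_lt] at h
        have := (lt_div_iff₀ hnpos).mp (by linarith : c + s < (∑ j, x j) / n)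
        linarith
      exact mul_le_mul_of_nonneg_left hsum (by linarith)
    · right
      show Real.exp _ ≤ Real.exp _
      rw [Real.exp_le_exp]
      have hsum : ∑ j, x j ≤ (n:ℝ) * (c - s) := by
        rw [neg_sub, lt_sub_iff_add_lt] at h
        have := (div_lt_iff₀ hnpos).mp (by linarith : (∑ j, x j) / n < c - s)
        linarith
      have := mul_le_mul_of_nonpos_left hsum (by linarith : -(4 * s) ≤ 0)
      linarith
  calc πn {x | s < |(∑ j, x j) / n - c|}
      ≤ πn ({x : Fin n → ℝ | Real.exp (4 * s * ((n:ℝ) * (c + s))) ≤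
          Real.exp (4 * s * ∑ j, x j)} ∪
        {x : Fin n → ℝ | Real.exp ((-(4 * s)) * ((n:ℝ) * (c - s))) ≤
          Real.exp ((-(4 * s)) * ∑ j, x j)}) := measure_mono hsub
    _ ≤ πn {x : Fin n → ℝ | Real.exp (4 * s * ((n:ℝ) * (c + s))) ≤
          Real.exp (4 * s * ∑ j, x j)} +
        πn {x : Fin n → ℝ | Real.exp ((-(4 * s)) * ((n:ℝ) * (c - s))) ≤
          Real.exp ((-(4 * s)) * ∑ j, x j)} := measure_union_le _ _
    _ ≤ ENNReal.ofReal (Real.exp ((n:ℝ) * (4 * s * c + (4 * s) ^ 2 / 8) -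
          4 * s * ((n:ℝ) * (c + s)))) +
        ENNReal.ofReal (Real.exp ((n:ℝ) * ((-(4 * s)) * c + (-(4 * s)) ^ 2 / 8) -
          (-(4 * s)) * ((n:ℝ) * (c - s)))) :=
        add_le_add (chernoff ν hsupp n (4 * s) _) (chernoff ν hsupp n (-(4 * s)) _)
    _ = ENNReal.ofReal (2 * Real.exp (-(2 * n * s ^ 2))) := by
        have h1 : (n:ℝ) * (4 * s * c + (4 * s) ^ 2 / 8) - 4 * s * ((n:ℝ) * (c + s)) =
            -(2 * n * s ^ 2) := by ring
        have h2 : (n:ℝ) * ((-(4 * s)) * c + (-(4 * s)) ^ 2 / 8) -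
            (-(4 * s)) * ((n:ℝ) * (c - s)) = -(2 * n * s ^ 2) := by ring
        rw [h1, h2, ← ENNReal.ofReal_add (Real.exp_pos _).le (Real.exp_pos _).le]
        congr 1
        ring


/-- Correctness of Algorithm 1. Draw `m = ⌈(1/γ)·log(2/δ)⌉` i.i.d. arms from a
distribution `p` under which an `(α/2)`-optimal arm has probability at least `γ`;
for each sampled arm take the empirical mean of `n = ⌈(8/α²)·log(4m/δ)⌉` i.i.d.
rewards in `[0,1]` with mean `f(arm)`. Then with probability at least `1 − δ`,
every arm maximizing the empirical means is `α`-optimal. -/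
theorem algorithm_one_correct {Arm : Type*} [MeasurableSpace Arm]
    (p : Measure Arm) [IsProbabilityMeasure p]
    (f : Arm → ℝ) (hf : Measurable f) (hf01 : ∀ x, f x ∈ Set.Icc (0 : ℝ) 1)
    (γ δ α : ℝ) (hγ : 0 < γ) (hδ0 : 0 < δ) (hδ1 : δ < 1) (hα0 : 0 < α) (hα1 : α < 1)
    (hp : ENNReal.ofReal γ ≤ p {π | (⨆ π', f π') - f π ≤ α / 2})
    (m : ℕ) (hm : m = ⌈(1 / γ) * Real.log (2 / δ)⌉₊)
    (n : ℕ) (hn : n = ⌈(8 / α ^ 2) * Real.log (4 * m / δ)⌉₊)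
    -- rewards: a Markov kernel giving, for each arm, the law of one reward,
    -- supported on `[0,1]` with mean `f`
    (κ : Kernel Arm ℝ) [IsMarkovKernel κ]
    (hκsupp : ∀ a, κ a (Set.Icc (0 : ℝ) 1)ᶜ = 0)
    (hκmean : ∀ a, (∫ x, x ∂κ a) = f a)
    -- the kernel giving `n` i.i.d. rewards for an arm
    (κn : Kernel Arm (Fin n → ℝ)) [IsMarkovKernel κn]
    (hκn : ∀ a, κn a = Measure.pi (fun _ : Fin n => κ a)) :
    ENNReal.ofReal (1 - δ) ≤
      (Measure.pi (fun _ : Fin m => (p ⊗ₘ κn)))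
        {ω : Fin m → Arm × (Fin n → ℝ) |
          ∀ i, (∀ k, (∑ j, (ω k).2 j) / n ≤ (∑ j, (ω i).2 j) / n) →
            (⨆ π', f π') - f (ω i).1 ≤ α} := by
  classical
  set S := ⨆ π', f π' with hS
  set μ := p ⊗ₘ κn with hμ
  haveI hμprob : IsProbabilityMeasure μ := by rw [hμ]; infer_instance
  set P := Measure.pi (fun _ : Fin m => μ) with hP
  -- numeric facts
  have hlog2δ : 0 < Real.log (2 / δ) := Real.log_pos (by rw [lt_div_iff₀ hδ0]; linarith)
  have hm0 : 0 < m := by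
    rw [hm]; exact Nat.ceil_pos.mpr (by positivity)
  have hmreal : (1 / γ) * Real.log (2 / δ) ≤ (m : ℝ) := hm ▸ Nat.le_ceil _
  have hmrpos : (0 : ℝ) < m := Nat.cast_pos.mpr hm0
  have h4m : (1 : ℝ) < 4 * m / δ := by
    rw [lt_div_iff₀ hδ0]
    have : (1:ℝ) ≤ m := Nat.one_le_cast.mpr hm0
    nlinarith
  have hlog4m : 0 < Real.log (4 * m / δ) := Real.log_pos h4m
  have hn0 : 0 < n := by
    rw [hn]; exact Nat.ceil_pos.mpr (by positivity)
  have hnreal : (8 / α ^ 2) * Real.log (4 * m / δ) ≤ (n : ℝ) := hn ▸ Nat.le_ceil _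
  have hexp2 : 2 * Real.exp (-(2 * n * (α / 4) ^ 2)) ≤ δ / (2 * m) := by
    have hL : Real.log (4 * m / δ) ≤ 2 * (n:ℝ) * (α / 4) ^ 2 := by
      have h1 : Real.log (4 * m / δ) = (α ^ 2 / 8) * ((8 / α ^ 2) * Real.log (4 * m / δ)) := by
        field_simp
      have h2 : (α ^ 2 / 8) * ((8 / α ^ 2) * Real.log (4 * m / δ)) ≤ (α ^ 2 / 8) * n :=
        mul_le_mul_of_nonneg_left hnreal (by positivity)
      have h3 : (α ^ 2 / 8) * (n:ℝ) = 2 * n * (α / 4) ^ 2 := by ring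
      linarith
    calc 2 * Real.exp (-(2 * n * (α / 4) ^ 2)) ≤ 2 * Real.exp (-Real.log (4 * m / δ)) := by
          have := Real.exp_le_exp.mpr (neg_le_neg hL)
          linarith
      _ = 2 * (δ / (4 * m)) := by
          rw [Real.exp_neg, Real.exp_log (by positivity), inv_div]
      _ = δ / (2 * m) := by ring
  -- the good-arm set and bad estimate set
  set A := {a : Arm | S - f a ≤ α / 2} with hA
  have hAmeas : MeasurableSet A := measurableSet_le (measurable_const.sub hf) measurable_const
  set Bad : Set (Arm × (Fin n → ℝ)) :=
    {ω₀ | α / 4 < |(∑ j, ω₀.2 j) / (n : ℝ) - f ω₀.1|} with hBad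
  have hmeasg : Measurable fun ω₀ : Arm × (Fin n → ℝ) =>
      |(∑ j, ω₀.2 j) / (n : ℝ) - f ω₀.1| := by
    apply Measurable.abs
    apply Measurable.sub
    · exact (Finset.measurable_sum Finset.univ
        (fun j _ => (measurable_pi_apply j).comp measurable_snd)).div_const _
    · exact hf.comp measurable_fst
  have hBadmeas : MeasurableSet Bad := measurableSet_lt measurable_const hmeasg
  -- bound on μ Bad
  have hBadle : μ Bad ≤ ENNReal.ofReal (δ / (2 * m)) := by
    rw [hμ, Measure.compProd_apply hBadmeas]
    have hpt : ∀ a, κn a (Prod.mk a ⁻¹' Bad) ≤ ENNReal.ofReal (δ / (2 * m)) := by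
      intro a
      haveI : IsProbabilityMeasure (κ a) := inferInstance
      rw [hκn a]
      have hpre : (Prod.mk a ⁻¹' Bad) =
          {x : Fin n → ℝ | α / 4 < |(∑ j, x j) / (n : ℝ) - f a|} := rfl
      rw [hpre]
      have hh := hoeffding_pi (κ a) (hκsupp a) n hn0 (α / 4) (by positivity)
      rw [hκmean a] at hh
      exact le_trans hh (ENNReal.ofReal_le_ofReal hexp2)
    calc ∫⁻ a, κn a (Prod.mk a ⁻¹' Bad) ∂p ≤ ∫⁻ _, ENNReal.ofReal (δ / (2 * m)) ∂p :=
          lintegral_mono hpt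
      _ = ENNReal.ofReal (δ / (2 * m)) := by simp
  -- the good events
  set GA := {ω : Fin m → Arm × (Fin n → ℝ) | ∃ i, (ω i).1 ∈ A} with hGA
  set GB := {ω : Fin m → Arm × (Fin n → ℝ) | ∀ i, ω i ∉ Bad} with hGB
  have hGAmeas : MeasurableSet GA := by
    have : GA = ⋃ i, (fun ω : Fin m → Arm × (Fin n → ℝ) => (ω i).1) ⁻¹' A := by
      ext ω; simp [hGA]
    rw [this]
    exact MeasurableSet.iUnion fun i => (measurable_fst.comp (measurable_pi_apply i)) hAmeas
  have hGBmeas : MeasurableSet GB := by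
    have : GB = ⋂ i, (fun ω : Fin m → Arm × (Fin n → ℝ) => ω i) ⁻¹' Badᶜ := by
      ext ω; simp [hGB]
    rw [this]
    exact MeasurableSet.iInter fun i => (measurable_pi_apply i) hBadmeas.compl
  -- inclusion into the target event
  have hGT : GA ∩ GB ⊆ {ω : Fin m → Arm × (Fin n → ℝ) |
      ∀ i, (∀ k, (∑ j, (ω k).2 j) / (n : ℝ) ≤ (∑ j, (ω i).2 j) / (n : ℝ)) →
        S - f (ω i).1 ≤ α} := by
    rintro ω ⟨⟨i₀, hi₀⟩, hacc⟩ i hi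
    have h1' : ¬ (α / 4 < |(∑ j, (ω i).2 j) / (n : ℝ) - f (ω i).1|) := hacc i
    have h2' : ¬ (α / 4 < |(∑ j, (ω i₀).2 j) / (n : ℝ) - f (ω i₀).1|) := hacc i₀
    have h1 := abs_le.mp (not_lt.mp h1')
    have h2 := abs_le.mp (not_lt.mp h2')
    have h3 := hi i₀
    have hi₀' : S - f (ω i₀).1 ≤ α / 2 := hi₀
    linarith [h1.1, h1.2, h2.1, h2.2]
  -- bound on GAᶜ
  have c1 : P GAᶜ ≤ ENNReal.ofReal (δ / 2) := by
    have hset : GAᶜ = Set.pi Set.univ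
        (fun _ : Fin m => (A ×ˢ (Set.univ : Set (Fin n → ℝ)))ᶜ) := by
      ext ω
      simp [hGA, Set.mem_pi]
    have hprodset : μ (A ×ˢ (Set.univ : Set (Fin n → ℝ))) = p A := by
      rw [hμ, Measure.compProd_apply_prod hAmeas MeasurableSet.univ]
      simp [setLIntegral_one]
    have hcompl : μ ((A ×ˢ (Set.univ : Set (Fin n → ℝ)))ᶜ) = 1 - p A := by
      rw [prob_compl_eq_one_sub (hAmeas.prod MeasurableSet.univ), hprodset]
    rw [hset, hP, Measure.pi_pi, Finset.prod_const, Finset.card_univ, Fintype.card_fin]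
    rcases lt_or_ge γ 1 with hγ1 | hγ1
    · have hle : μ ((A ×ˢ (Set.univ : Set (Fin n → ℝ)))ᶜ) ≤ ENNReal.ofReal (1 - γ) := by
        rw [hcompl]
        calc 1 - p A ≤ 1 - ENNReal.ofReal γ := tsub_le_tsub_left hp 1
          _ = ENNReal.ofReal (1 - γ) := by
              rw [← ENNReal.ofReal_one, ← ENNReal.ofReal_sub _ hγ.le]
      have hreal : (1 - γ) ^ m ≤ δ / 2 := by
        have e1 : (1 - γ) ^ m ≤ Real.exp (-γ) ^ m := by
          apply pow_le_pow_left₀ (by linarith)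
          linarith [Real.add_one_le_exp (-γ)]
        have e2 : Real.exp (-γ) ^ m = Real.exp ((m : ℝ) * (-γ)) := (Real.exp_nat_mul _ m).symm
        have e3 : Real.log (2 / δ) ≤ γ * m := by
          have h1 : γ * ((1 / γ) * Real.log (2 / δ)) ≤ γ * m :=
            mul_le_mul_of_nonneg_left hmreal hγ.le
          have h2 : γ * ((1 / γ) * Real.log (2 / δ)) = Real.log (2 / δ) := by
            field_simp
          linarith
        have e4 : Real.exp ((m : ℝ) * (-γ)) ≤ Real.exp (-Real.log (2 / δ)) := by
          apply Real.exp_le_exp.mpr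
          nlinarith
        have e5 : Real.exp (-Real.log (2 / δ)) = δ / 2 := by
          rw [Real.exp_neg, Real.exp_log (by positivity), inv_div]
        calc (1 - γ) ^ m ≤ Real.exp (-γ) ^ m := e1
          _ = Real.exp ((m : ℝ) * (-γ)) := e2
          _ ≤ Real.exp (-Real.log (2 / δ)) := e4
          _ = δ / 2 := e5
      calc μ ((A ×ˢ (Set.univ : Set (Fin n → ℝ)))ᶜ) ^ m ≤ (ENNReal.ofReal (1 - γ)) ^ m :=
            pow_le_pow_left' hle m
        _ = ENNReal.ofReal ((1 - γ) ^ m) := (ENNReal.ofReal_pow (by linarith) m).symm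
        _ ≤ ENNReal.ofReal (δ / 2) := ENNReal.ofReal_le_ofReal hreal
    · have hpA : p A = 1 := by
        refine le_antisymm prob_le_one ?_
        calc (1 : ENNReal) = ENNReal.ofReal 1 := ENNReal.ofReal_one.symm
          _ ≤ ENNReal.ofReal γ := ENNReal.ofReal_le_ofReal hγ1
          _ ≤ p A := hp
      have hz : μ ((A ×ˢ (Set.univ : Set (Fin n → ℝ)))ᶜ) = 0 := by
        rw [hcompl, hpA]; simp
      rw [hz, zero_pow hm0.ne']
      exact zero_le
  -- bound on GBᶜ
  have c2 : P GBᶜ ≤ ENNReal.ofReal (δ / 2) := by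
    have hset : GBᶜ = ⋃ i, {ω : Fin m → Arm × (Fin n → ℝ) | ω i ∈ Bad} := by
      ext ω; simp [hGB]
    calc P GBᶜ ≤ ∑' i : Fin m, P {ω : Fin m → Arm × (Fin n → ℝ) | ω i ∈ Bad} := by
          rw [hset]; exact measure_iUnion_le _
      _ = ∑' _ : Fin m, μ Bad := by
          refine tsum_congr fun i => ?_
          rw [hP]
          exact pi_eval_mem μ i Bad
      _ = (m : ENNReal) * μ Bad := by
          rw [tsum_fintype]
          simp [Finset.sum_const, Finset.card_univ, nsmul_eq_mul]
      _ ≤ (m : ENNReal) * ENNReal.ofReal (δ / (2 * m)) := mul_le_mul_right hBadle _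
      _ ≤ ENNReal.ofReal (δ / 2) := by
          rw [← ENNReal.ofReal_natCast m, ← ENNReal.ofReal_mul (Nat.cast_nonneg m)]
          apply ENNReal.ofReal_le_ofReal
          have : (m : ℝ) * (δ / (2 * m)) = δ / 2 := by
            field_simp
          linarith
  -- conclusion
  have hGmeas : MeasurableSet (GA ∩ GB) := hGAmeas.inter hGBmeas
  have hPcompl : P (GA ∩ GB)ᶜ ≤ ENNReal.ofReal δ := by
    calc P (GA ∩ GB)ᶜ = P (GAᶜ ∪ GBᶜ) := by rw [Set.compl_inter]
      _ ≤ P GAᶜ + P GBᶜ := measure_union_le _ _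
      _ ≤ ENNReal.ofReal (δ / 2) + ENNReal.ofReal (δ / 2) := add_le_add c1 c2
      _ = ENNReal.ofReal δ := by
          rw [← ENNReal.ofReal_add (by linarith) (by linarith)]
          norm_num
  have hPG : P (GA ∩ GB) = 1 - P (GA ∩ GB)ᶜ := by
    have h := prob_compl_eq_one_sub (μ := P) hGmeas.compl
    rw [compl_compl] at h
    exact h
  calc ENNReal.ofReal (1 - δ) = 1 - ENNReal.ofReal δ := by
        rw [ENNReal.ofReal_sub _ hδ0.le, ENNReal.ofReal_one]
    _ ≤ 1 - P (GA ∩ GB)ᶜ := tsub_le_tsub_left hPcompl 1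
    _ = P (GA ∩ GB) := hPG.symm
    _ ≤ P _ := measure_mono hGT
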